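/- Let n > p ≥ 2 be integers with c = 2/n (i.e., n·c = 2). Then the three real numbers X, Y, α with α ≠ 0 cannot simultaneously satisfy: X - (1 + 2/(nc+2))·Y/α + (nc/2)·(nc/2+1)·α³ = 0, Y + ((nc+2)·(nc(n-p)+3nc-2(p-1))/(4(n-p)))·α⁴ = 0, and -X + (2(p-1)/(nc+2) + (n-p)(3nc-2(p-1))/(nc(n-p)+3nc-2(p-1)))·Y/α + (n²c²/4 + (p-1)² + (3nc-2(p-1))²/(4(n-p)))·α³ = 0, where X stands for e₁e₁(α) and Y for (e₁α)². -/

import Mathlib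

theorem no_solution_nc_eq_two (n p : ℤ) (hp : 2 ≤ p) (hpn : p < n) (c : ℝ)
    (hc : (n : ℝ) * c = 2)
    (hden : (n : ℝ) * c * ((n : ℝ) - p) + 3 * (n : ℝ) * c - 2 * ((p : ℝ) - 1) ≠ 0)
    (X Y α : ℝ) (hα : α ≠ 0) :
    ¬ (X - (1 + 2 / ((n : ℝ) * c + 2)) * Y / α +
          ((n : ℝ) * c / 2) * ((n : ℝ) * c / 2 + 1) * α ^ 3 = 0 ∧
       Y + (((n : ℝ) * c + 2) * ((n : ℝ) * c * ((n : ℝ) - p) + 3 * (n : ℝ) * c -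
              2 * ((p : ℝ) - 1)) / (4 * ((n : ℝ) - p))) * α ^ 4 = 0 ∧
       -X + (2 * ((p : ℝ) - 1) / ((n : ℝ) * c + 2) +
              ((n : ℝ) - p) * (3 * (n : ℝ) * c - 2 * ((p : ℝ) - 1)) /
                ((n : ℝ) * c * ((n : ℝ) - p) + 3 * (n : ℝ) * c - 2 * ((p : ℝ) - 1))) * Y / α +
          ((n : ℝ) ^ 2 * c ^ 2 / 4 + ((p : ℝ) - 1) ^ 2 +
              (3 * (n : ℝ) * c - 2 * ((p : ℝ) - 1)) ^ 2 / (4 * ((n : ℝ) - p))) * α ^ 3 = 0) := by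
  rintro ⟨h1, h2, h3⟩
  have hm : (1:ℝ) ≤ (n:ℝ) - p := by
    have : (p:ℝ) + 1 ≤ n := by exact_mod_cast hpn
    linarith
  have hq : (1:ℝ) ≤ (p:ℝ) - 1 := by
    have : (2:ℝ) ≤ p := by exact_mod_cast hp
    linarith
  have hm0 : (n:ℝ) - p ≠ 0 := by linarith
  have h4 : (n:ℝ) * c + 2 = 4 := by rw [hc]; norm_num
  have h4ne : (n:ℝ) * c + 2 ≠ 0 := by rw [h4]; norm_num
  have hD : (n:ℝ) * c * ((n:ℝ) - p) + 3 * (n:ℝ) * c - 2 * ((p:ℝ) - 1)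
      = 2 * (((n:ℝ) - p) + 3 - ((p:ℝ) - 1)) := by linear_combination ((n:ℝ) - p + 3) * hc
  rw [hD] at h2 h3 hden
  have hK : ((n:ℝ) - p) + 3 - ((p:ℝ) - 1) ≠ 0 := by
    intro h; exact hden (by rw [h]; ring)
  field_simp at h1 h2 h3
  have h1' : 2*X*α - 3*Y + 4*α^4 = 0 := by
    linear_combination h1/8 - (X*α/2 - Y/2 + (α^4*((n:ℝ)*c*((n:ℝ)*c) + 6*((n:ℝ)*c) + 16))/8)*hc
  have h2' : ((n:ℝ)-p)*Y + 2*(((n:ℝ)-p) + 3 - ((p:ℝ)-1))*α^4 = 0 := by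
    linear_combination h2/4 - ((((n:ℝ)-p) + 3 - ((p:ℝ)-1))*α^4/2)*hc
  have h3' : -2*(((n:ℝ)-p)+3-((p:ℝ)-1))*((n:ℝ)-p)*X*α
      + ((n:ℝ)-p)*(((p:ℝ)-1)*(((n:ℝ)-p)+3-((p:ℝ)-1)) + ((n:ℝ)-p)*(6-2*((p:ℝ)-1)))*Y
      + 2*(((n:ℝ)-p)+3-((p:ℝ)-1))*(((n:ℝ)-p)*(1+((p:ℝ)-1)^2)+(3-((p:ℝ)-1))^2)*α^4 = 0 := by
    have h3c := h3
    rw [show (n:ℝ)^2*c^2 = 4 by rw [← mul_pow, hc]; norm_num, hc] at h3c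
    linear_combination h3c/16
  have hkey : 2*(((n:ℝ)-p)+3-((p:ℝ)-1))*α^4*
      (((n:ℝ)-p)*(((p:ℝ)-1)^2+((p:ℝ)-1)) + 2*(3-((p:ℝ)-1))^2) = 0 := by
    linear_combination h3' + (((n:ℝ)-p)+3-((p:ℝ)-1))*((n:ℝ)-p)*h1'
      - (((p:ℝ)-1)*(((n:ℝ)-p)+3-((p:ℝ)-1)) - 3*(((n:ℝ)-p)+3-((p:ℝ)-1))
          + 6*((n:ℝ)-p) - 2*((p:ℝ)-1)*((n:ℝ)-p))*h2'
  have hPpos : (0:ℝ) < ((n:ℝ)-p)*(((p:ℝ)-1)^2+((p:ℝ)-1)) + 2*(3-((p:ℝ)-1))^2 := by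
    nlinarith
  have hα4 : α^4 ≠ 0 := pow_ne_zero _ hα
  exact (mul_ne_zero (mul_ne_zero (mul_ne_zero two_ne_zero hK) hα4) (ne_of_gt hPpos)) hkey
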